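/- arXiv:1211.4640 — 6 statements merged into one kernel-verified Lean document; each statement's English description precedes it below -/
import Mathlib

section
/- For all real s, t and every integer n ≥ 1, ∫₀¹ |exp( ((t²−s²)/(4n))·Σ_{j=1}^n cos(4π·8^j·θ) ) − 1| dθ ≤ (exp(n^{−1/4}·(s²+t²)) − 1) + exp(s²+t²)/n. -/
open MeasureTheory
open scoped Real

lemma aux_abs_exp_sub_one (x : ℝ) : |Real.exp x - 1| ≤ |x| * Real.exp |x| := by
  rcases le_or_gt 0 x with h | h
  · rw [abs_of_nonneg h, abs_of_nonneg (by linarith [Real.one_le_exp h] : (0:ℝ) ≤ Real.exp x - 1)]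
    have h1 := Real.add_one_le_exp (-x)
    rw [Real.exp_neg] at h1
    have h2 := mul_le_mul_of_nonneg_left h1 (Real.exp_pos x).le
    rw [mul_inv_cancel₀ (Real.exp_pos x).ne'] at h2
    nlinarith
  · rw [abs_of_neg h, abs_of_nonpos (by linarith [Real.exp_lt_one_iff.mpr h] : Real.exp x - 1 ≤ 0)]
    have h1 := Real.add_one_le_exp x
    have h2 := Real.one_le_exp (by linarith : (0:ℝ) ≤ -x)
    nlinarith

lemma aux_int_cos (c : ℝ) (hc : c ≠ 0) :
    ∫ θ in (0:ℝ)..1, Real.cos (c * θ) = Real.sin c / c := by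
  rw [intervalIntegral.integral_comp_mul_left (fun x => Real.cos x) hc]
  simp [integral_cos, smul_eq_mul, div_eq_inv_mul]

lemma aux_int_cos_int (K : ℤ) (hK : K ≠ 0) :
    ∫ θ in (0:ℝ)..1, Real.cos ((K * π) * θ) = 0 := by
  rw [aux_int_cos _ (mul_ne_zero (Int.cast_ne_zero.mpr hK) Real.pi_ne_zero)]
  simp [Real.sin_int_mul_pi]

lemma aux_orth (j k : ℕ) :
    ∫ θ in (0:ℝ)..1, Real.cos (4*π*8^j*θ) * Real.cos (4*π*8^k*θ)
      = if j = k then 1/2 else 0 := by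
  by_cases hjk : j = k
  · subst hjk
    rw [if_pos rfl]
    have hexp : ∀ θ : ℝ, Real.cos (4*π*8^j*θ) * Real.cos (4*π*8^j*θ)
        = (1 + Real.cos ((((8*8^j : ℤ) : ℝ) * π) * θ)) / 2 := by
      intro θ
      have e2 : (((8*8^j : ℤ) : ℝ) * π) * θ = 4*π*8^j*θ + 4*π*8^j*θ := by push_cast; ring
      rw [e2, Real.cos_add]
      linear_combination (1/2) * Real.sin_sq_add_cos_sq (4*π*8^j*θ)
    simp_rw [hexp]
    rw [intervalIntegral.integral_div,
      intervalIntegral.integral_add intervalIntegrable_const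
        ((by fun_prop : Continuous fun θ : ℝ => Real.cos ((((8*8^j : ℤ) : ℝ) * π) * θ)).intervalIntegrable _ _),
      aux_int_cos_int _ (by positivity)]
    simp
  · rw [if_neg hjk]
    have hne : (8:ℕ)^j ≠ 8^k := fun h => hjk (Nat.pow_right_injective (by norm_num) h)
    have hK1 : (4*8^j - 4*8^k : ℤ) ≠ 0 := by
      intro h
      apply hne
      have : (4*8^j : ℤ) = 4*8^k := by linarith [sub_eq_zero.mp h]
      exact_mod_cast mul_left_cancel₀ (by norm_num : (4:ℤ) ≠ 0) this
    have hK2 : (4*8^j + 4*8^k : ℤ) ≠ 0 := by positivity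
    have hexp : ∀ θ : ℝ, Real.cos (4*π*8^j*θ) * Real.cos (4*π*8^k*θ)
        = (Real.cos ((((4*8^j - 4*8^k : ℤ) : ℝ) * π) * θ)
          + Real.cos ((((4*8^j + 4*8^k : ℤ) : ℝ) * π) * θ)) / 2 := by
      intro θ
      have e1 : (((4*8^j - 4*8^k : ℤ) : ℝ) * π) * θ = 4*π*8^j*θ - 4*π*8^k*θ := by push_cast; ring
      have e2 : (((4*8^j + 4*8^k : ℤ) : ℝ) * π) * θ = 4*π*8^j*θ + 4*π*8^k*θ := by push_cast; ring
      rw [e1, e2, Real.cos_sub, Real.cos_add]; ring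
    simp_rw [hexp]
    rw [intervalIntegral.integral_div,
      intervalIntegral.integral_add
        ((by fun_prop : Continuous fun θ : ℝ => Real.cos ((((4*8^j - 4*8^k : ℤ) : ℝ) * π) * θ)).intervalIntegrable _ _)
        ((by fun_prop : Continuous fun θ : ℝ => Real.cos ((((4*8^j + 4*8^k : ℤ) : ℝ) * π) * θ)).intervalIntegrable _ _),
      aux_int_cos_int _ hK1, aux_int_cos_int _ hK2]
    simp

lemma aux_final_ineq (u a : ℝ) (hu : 0 ≤ u) (ha : 1 ≤ a) :
    u / (4*a^4) * Real.exp (u/4) * a^2 ≤ u * a⁻¹ + Real.exp u / a^4 := by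
  have ha0 : (0:ℝ) < a := by linarith
  set E := Real.exp (u/4) with hE
  have hE0 : (0:ℝ) < E := Real.exp_pos _
  have hE1 : 1 + u/4 ≤ E := by
    have := Real.add_one_le_exp (u/4); linarith
  have h4 : Real.exp u = E^4 := by
    rw [hE, ← Real.exp_nat_mul]; congr 1; push_cast; ring
  rcases le_or_gt E (4*a) with h | h
  · have key : u / (4*a^4) * E * a^2 ≤ u * a⁻¹ := by
      have e1 : u / (4*a^4) * E * a^2 = (u*E)/(4*a^2) := by field_simp
      have e2 : u * a⁻¹ = u / a := by rw [div_eq_mul_inv]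
      rw [e1, e2, div_le_div_iff₀ (by positivity) ha0]
      nlinarith [mul_le_mul_of_nonneg_left h (mul_nonneg hu ha0.le)]
    have : (0:ℝ) ≤ Real.exp u / a^4 := by positivity
    linarith
  · have hE2 : 16*a^2 < E^2 := by nlinarith
    have hu4 : u ≤ 4*E := by linarith
    have claim : u*E*a^2 ≤ 4*E^4 := by
      have t1 : u*E*(16*a^2) ≤ u*E*(E^2) :=
        mul_le_mul_of_nonneg_left hE2.le (mul_nonneg hu hE0.le)
      have t2 : u*E^3 ≤ (4*E)*E^3 := mul_le_mul_of_nonneg_right hu4 (pow_nonneg hE0.le 3)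
      nlinarith [t1, t2]
    have key : u / (4*a^4) * E * a^2 ≤ E^4/a^4 := by
      have e1 : u / (4*a^4) * E * a^2 = (u*E*a^2)/(4*a^4) := by field_simp
      rw [e1, div_le_div_iff₀ (by positivity) (by positivity)]
      nlinarith [pow_pos ha0 4]
    have : (0:ℝ) ≤ u * a⁻¹ := by positivity
    rw [h4]; linarith

theorem exp_cos_sum_deviation_bound (n : ℕ) (hn : 1 ≤ n) (s t : ℝ) :
    (∫ θ in (0:ℝ)..1,
        |Real.exp (((t ^ 2 - s ^ 2) / (4 * n)) *
          ∑ j ∈ Finset.Icc 1 n, Real.cos (4 * π * 8 ^ j * θ)) - 1|) ≤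
      (Real.exp ((n : ℝ) ^ (-(1/4 : ℝ)) * (s ^ 2 + t ^ 2)) - 1)
        + Real.exp (s ^ 2 + t ^ 2) / n := by
  have hr : (1:ℝ) ≤ (n:ℝ) := by exact_mod_cast hn
  have hr0 : (0:ℝ) < (n:ℝ) := by linarith
  set r := (n:ℝ) with hrdef
  set u := s^2 + t^2 with hudef
  set c := (t^2 - s^2)/(4*r) with hcdef
  set S : ℝ → ℝ := fun θ => ∑ j ∈ Finset.Icc 1 n, Real.cos (4*π*8^j*θ) with hSdef
  have hu0 : 0 ≤ u := by positivity
  have hScont : Continuous S := by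
    apply continuous_finset_sum
    intro j _
    fun_prop
  have hsp : (0:ℝ) < Real.sqrt r := Real.sqrt_pos.mpr hr0
  have hss : Real.sqrt r * Real.sqrt r = r := Real.mul_self_sqrt hr0.le
  have hcabs : |c| ≤ u/(4*r) := by
    rw [hcdef, abs_div, abs_of_pos (by positivity : (0:ℝ) < 4*r)]
    apply div_le_div_of_nonneg_right ?_ (by positivity)
    rw [hudef]
    exact abs_le.mpr ⟨by nlinarith [sq_nonneg s, sq_nonneg t], by nlinarith [sq_nonneg s, sq_nonneg t]⟩
  have hSb : ∀ θ : ℝ, |S θ| ≤ r := by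
    intro θ
    calc |S θ| ≤ ∑ j ∈ Finset.Icc 1 n, |Real.cos (4*π*8^j*θ)| := Finset.abs_sum_le_sum_abs _ _
    _ ≤ ∑ j ∈ Finset.Icc 1 n, 1 := Finset.sum_le_sum fun j _ => Real.abs_cos_le_one _
    _ = r := by simp [hrdef, Nat.card_Icc]
  -- second moment
  have hS2int : ∫ θ in (0:ℝ)..1, (S θ)^2 = r/2 := by
    have hsq : ∀ θ : ℝ, (S θ)^2 = ∑ j ∈ Finset.Icc 1 n, ∑ k ∈ Finset.Icc 1 n,
        Real.cos (4*π*8^j*θ) * Real.cos (4*π*8^k*θ) := by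
      intro θ
      simp only [hSdef]
      rw [sq, Finset.sum_mul_sum]
    simp_rw [hsq]
    rw [intervalIntegral.integral_finset_sum (fun j _ =>
      ((continuous_finset_sum _ (fun k _ => by fun_prop) :
        Continuous fun θ : ℝ => ∑ k ∈ Finset.Icc 1 n,
          Real.cos (4*π*8^j*θ) * Real.cos (4*π*8^k*θ))).intervalIntegrable _ _)]
    have step : ∀ j ∈ Finset.Icc 1 n,
        (∫ θ in (0:ℝ)..1, ∑ k ∈ Finset.Icc 1 n, Real.cos (4*π*8^j*θ) * Real.cos (4*π*8^k*θ))
          = (1/2 : ℝ) := by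
      intro j hj
      rw [intervalIntegral.integral_finset_sum (fun k _ =>
        ((by fun_prop : Continuous fun θ : ℝ =>
          Real.cos (4*π*8^j*θ) * Real.cos (4*π*8^k*θ))).intervalIntegrable _ _)]
      rw [Finset.sum_congr rfl (fun k _ => aux_orth j k), Finset.sum_ite_eq, if_pos hj]
    rw [Finset.sum_congr rfl step, Finset.sum_const, Nat.card_Icc]
    simp only [hrdef, nsmul_eq_mul]
    push_cast [Nat.add_sub_cancel]
    ring
  -- pointwise bound
  have hpt : ∀ θ ∈ Set.Icc (0:ℝ) 1,
      |Real.exp (c * S θ) - 1|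
        ≤ |c| * Real.exp (u/4) * ((Real.sqrt r + (S θ)^2 / Real.sqrt r)/2) := by
    intro θ _
    have habs : |c * S θ| = |c| * |S θ| := abs_mul _ _
    have hcs : |c * S θ| ≤ u/4 := by
      rw [habs]
      calc |c| * |S θ| ≤ (u/(4*r)) * r :=
        mul_le_mul hcabs (hSb θ) (abs_nonneg _) (by positivity)
      _ = u/4 := by field_simp
    have hSle : |S θ| ≤ (Real.sqrt r + (S θ)^2/Real.sqrt r)/2 := by
      have key : 2*|S θ| - Real.sqrt r ≤ (S θ)^2/Real.sqrt r := by
        rw [le_div_iff₀ hsp]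
        nlinarith [sq_nonneg (|S θ| - Real.sqrt r), sq_abs (S θ)]
      linarith
    calc |Real.exp (c * S θ) - 1| ≤ |c * S θ| * Real.exp |c * S θ| :=
      aux_abs_exp_sub_one _
    _ ≤ |c * S θ| * Real.exp (u/4) :=
      mul_le_mul_of_nonneg_left (Real.exp_le_exp.mpr hcs) (abs_nonneg _)
    _ = |c| * Real.exp (u/4) * |S θ| := by rw [habs]; ring
    _ ≤ |c| * Real.exp (u/4) * ((Real.sqrt r + (S θ)^2/Real.sqrt r)/2) :=
      mul_le_mul_of_nonneg_left hSle (by positivity)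
  have hfc : Continuous fun θ : ℝ => |Real.exp (c * S θ) - 1| :=
    ((Real.continuous_exp.comp (continuous_const.mul hScont)).sub continuous_const).abs
  have hgc : Continuous fun θ : ℝ =>
      |c| * Real.exp (u/4) * ((Real.sqrt r + (S θ)^2/Real.sqrt r)/2) :=
    continuous_const.mul (((continuous_const.add ((hScont.pow 2).div_const _)).div_const 2))
  have hmono : (∫ θ in (0:ℝ)..1, |Real.exp (c * S θ) - 1|)
      ≤ ∫ θ in (0:ℝ)..1, |c| * Real.exp (u/4) * ((Real.sqrt r + (S θ)^2/Real.sqrt r)/2) :=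
    intervalIntegral.integral_mono_on (by norm_num : (0:ℝ) ≤ 1)
      (hfc.intervalIntegrable _ _) (hgc.intervalIntegrable _ _) hpt
  have hgint : (∫ θ in (0:ℝ)..1, |c| * Real.exp (u/4) * ((Real.sqrt r + (S θ)^2/Real.sqrt r)/2))
      = |c| * Real.exp (u/4) * ((Real.sqrt r + (r/2)/Real.sqrt r)/2) := by
    rw [intervalIntegral.integral_const_mul]
    congr 1
    rw [intervalIntegral.integral_div]
    congr 1
    rw [intervalIntegral.integral_add (g := fun θ => S θ ^ 2 / Real.sqrt r) intervalIntegrable_const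
      (((hScont.pow 2).div_const _).intervalIntegrable _ _),
      intervalIntegral.integral_div, hS2int]
    simp
  have hbound1 : |c| * Real.exp (u/4) * ((Real.sqrt r + (r/2)/Real.sqrt r)/2)
      ≤ u/(4*r) * Real.exp (u/4) * Real.sqrt r := by
    have hs2 : (Real.sqrt r + (r/2)/Real.sqrt r)/2 ≤ Real.sqrt r := by
      have h1 : (r/2)/Real.sqrt r ≤ Real.sqrt r := by
        rw [div_le_iff₀ hsp]; nlinarith
      linarith
    exact mul_le_mul (mul_le_mul_of_nonneg_right hcabs (Real.exp_pos _).le) hs2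
      (by positivity) (by positivity)
  have hbound2 : u/(4*r) * Real.exp (u/4) * Real.sqrt r
      ≤ (Real.exp (r^(-(1/4:ℝ)) * u) - 1) + Real.exp u / r := by
    set a := r^((1/4:ℝ)) with hadef
    have ha1 : 1 ≤ a := by
      rw [hadef]
      calc (1:ℝ) = 1^((1/4:ℝ)) := (Real.one_rpow _).symm
      _ ≤ r^((1/4:ℝ)) := Real.rpow_le_rpow (by norm_num) hr (by norm_num)
    have ha4 : a^(4:ℕ) = r := by
      rw [hadef, ← Real.rpow_natCast (r^((1/4:ℝ))) 4, ← Real.rpow_mul hr0.le]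
      norm_num
    have hsq2 : Real.sqrt r = a^(2:ℕ) := by
      rw [hadef, Real.sqrt_eq_rpow, ← Real.rpow_natCast (r^((1/4:ℝ))) 2, ← Real.rpow_mul hr0.le]
      norm_num
    have hinv : r^(-(1/4:ℝ)) = a⁻¹ := by
      rw [hadef, ← Real.rpow_neg_one (r^((1/4:ℝ))), ← Real.rpow_mul hr0.le]
      norm_num
    rw [hinv, hsq2, ← ha4]
    have hfin := aux_final_ineq u a hu0 ha1
    have hcomm : u * a⁻¹ = a⁻¹ * u := mul_comm _ _
    have hexp1 := Real.add_one_le_exp (a⁻¹ * u)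
    linarith
  show (∫ θ in (0:ℝ)..1, |Real.exp (c * S θ) - 1|)
      ≤ (Real.exp (r^(-(1/4:ℝ)) * u) - 1) + Real.exp u / r
  calc (∫ θ in (0:ℝ)..1, |Real.exp (c * S θ) - 1|)
      ≤ ∫ θ in (0:ℝ)..1, |c| * Real.exp (u/4) * ((Real.sqrt r + (S θ)^2/Real.sqrt r)/2) := hmono
  _ = |c| * Real.exp (u/4) * ((Real.sqrt r + (r/2)/Real.sqrt r)/2) := hgint
  _ ≤ u/(4*r) * Real.exp (u/4) * Real.sqrt r := hbound1
  _ ≤ (Real.exp (r^(-(1/4:ℝ)) * u) - 1) + Real.exp u / r := hbound2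
end

section
/- For every integer n ≥ 1 and all real s, t, the integral over [0,1] of the product αₙ(s,t,θ) = Π_{j=1}^n (1 + i·s·sin(2π·8^j·θ)/√n) · Π_{j=1}^n (1 + i·t·cos(2π·8^j·θ)/√n) equals 1, i.e. ∫₀¹ αₙ(s,t,θ) dθ = 1. -/
open MeasureTheory
open scoped Real

/-- `αₙ(s,t,θ) = Π_{j=1}^n (1 + i·s·sin(2π·8^j·θ)/√n) · Π_{j=1}^n (1 + i·t·cos(2π·8^j·θ)/√n)`. -/
noncomputable def lacunaryProd (n : ℕ) (s t θ : ℝ) : ℂ :=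
  (∏ j ∈ Finset.Icc 1 n, (1 + Complex.I * s * Real.sin (2 * π * 8 ^ j * θ) / Real.sqrt n)) *
  (∏ j ∈ Finset.Icc 1 n, (1 + Complex.I * t * Real.cos (2 * π * 8 ^ j * θ) / Real.sqrt n))

noncomputable def ee (k : ℤ) (θ : ℝ) : ℂ := Complex.exp (2 * π * Complex.I * k * θ)

lemma ee_add (k l : ℤ) (θ : ℝ) : ee (k + l) θ = ee k θ * ee l θ := by
  rw [ee, ee, ee, ← Complex.exp_add]
  congr 1
  push_cast
  ring

lemma ee_zero (θ : ℝ) : ee 0 θ = 1 := by simp [ee]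

lemma continuous_ee (k : ℤ) : Continuous (ee k) := by
  unfold ee; fun_prop

lemma integral_ee (k : ℤ) :
    ∫ θ in (0:ℝ)..1, ee k θ = if k = 0 then 1 else 0 := by
  rcases eq_or_ne k 0 with rfl | hk
  · simp [ee_zero]
  · rw [if_neg hk]
    have hc : (2 * (π:ℂ) * Complex.I * k) ≠ 0 := by
      simp [Real.pi_ne_zero, Complex.I_ne_zero, hk]
    have : ∀ θ : ℝ, ee k θ = Complex.exp ((2 * (π:ℂ) * Complex.I * k) * θ) := by
      intro θ; rw [ee]
    simp_rw [this]
    rw [integral_exp_mul_complex hc]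
    have h1 : Complex.exp (2 * (π:ℂ) * Complex.I * k) = 1 := by
      rw [show (2 * (π:ℂ) * Complex.I * k) = (k:ℂ) * (2 * π * Complex.I) by push_cast; ring]
      exact Complex.exp_int_mul_two_pi_mul_I k
    simp [h1]

noncomputable def coeffD (n : ℕ) (s t : ℝ) (ε : ℤ) : ℂ :=
  if ε = 0 then 1
  else if ε = 1 then (s : ℂ) / (2 * Real.sqrt n) + Complex.I * t / (2 * Real.sqrt n)
  else if ε = -1 then Complex.I * t / (2 * Real.sqrt n) - (s : ℂ) / (2 * Real.sqrt n)
  else if ε = 2 then ((s : ℂ) / (2 * Real.sqrt n)) * (Complex.I * t / (2 * Real.sqrt n))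
  else if ε = -2 then -(((s : ℂ) / (2 * Real.sqrt n)) * (Complex.I * t / (2 * Real.sqrt n)))
  else 0

lemma coeffD_zero (n : ℕ) (s t : ℝ) : coeffD n s t 0 = 1 := by simp [coeffD]

lemma factor_eq (n : ℕ) (s t : ℝ) (j : ℕ) (θ : ℝ) :
    (1 + Complex.I * s * Real.sin (2 * π * 8 ^ j * θ) / Real.sqrt n) *
      (1 + Complex.I * t * Real.cos (2 * π * 8 ^ j * θ) / Real.sqrt n) =
    ∑ ε ∈ Finset.Icc (-2 : ℤ) 2, coeffD n s t ε * ee (ε * 8 ^ j) θ := by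
  have hIcc : Finset.Icc (-2 : ℤ) 2 = {-2, -1, 0, 1, 2} := by decide
  set A : ℂ := ((2 * π * 8 ^ j * θ : ℝ) : ℂ) * Complex.I with hA
  have hE1 : ee ((8:ℤ) ^ j) θ = Complex.exp A := by
    rw [ee, hA]; congr 1; push_cast; ring
  have hEm1 : ee (-(8:ℤ) ^ j) θ = Complex.exp (-A) := by
    rw [ee, hA]; congr 1; push_cast; ring
  have hE2 : ee ((2:ℤ) * 8 ^ j) θ = Complex.exp A * Complex.exp A := by
    rw [← Complex.exp_add, ee, hA]; congr 1; push_cast; ring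
  have hEm2 : ee ((-2:ℤ) * 8 ^ j) θ = Complex.exp (-A) * Complex.exp (-A) := by
    rw [← Complex.exp_add, ee, hA]; congr 1; push_cast; ring
  have hsin : (Real.sin (2 * π * 8 ^ j * θ) : ℂ)
      = (Complex.exp (-A) - Complex.exp A) * Complex.I / 2 := by
    rw [Complex.ofReal_sin, show ∀ z : ℂ, Complex.sin z
      = (Complex.exp (-z * Complex.I) - Complex.exp (z * Complex.I)) * Complex.I / 2
      from fun z => rfl]
    rw [hA]; ring_nf
  have hcos : (Real.cos (2 * π * 8 ^ j * θ) : ℂ)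
      = (Complex.exp A + Complex.exp (-A)) / 2 := by
    rw [Complex.ofReal_cos, show ∀ z : ℂ, Complex.cos z
      = (Complex.exp (z * Complex.I) + Complex.exp (-z * Complex.I)) / 2
      from fun z => rfl]
    rw [hA]; ring_nf
  have huv : Complex.exp A * Complex.exp (-A) = 1 := by
    rw [← Complex.exp_add]; simp
  rw [hIcc]
  rw [Finset.sum_insert (by decide), Finset.sum_insert (by decide),
    Finset.sum_insert (by decide), Finset.sum_insert (by decide), Finset.sum_singleton]
  rw [show ((-1:ℤ) * 8 ^ j) = -(8:ℤ)^j by ring, show ((1:ℤ) * 8 ^ j) = (8:ℤ)^j by ring,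
    show ((0:ℤ) * 8 ^ j) = (0:ℤ) by ring]
  rw [hE1, hEm1, hE2, hEm2, ee_zero, hsin, hcos]
  simp only [coeffD]
  norm_num
  set E := Complex.exp A
  set F := Complex.exp (-A)
  have hI2 : Complex.I ^ 2 = -1 := Complex.I_sq
  linear_combination (↑s * (F - E) / (2 * (Real.sqrt n : ℂ)) *
    (1 + Complex.I * ↑t * ((E + F) / 2) / (Real.sqrt n : ℂ))) * hI2

noncomputable def Sb (m : ℕ) : ℤ := 2 * ∑ j ∈ Finset.Icc 1 m, (8:ℤ) ^ j

lemma Sb_nonneg (m : ℕ) : 0 ≤ Sb m := by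
  unfold Sb
  positivity

lemma Sb_lt (m : ℕ) : Sb m < 8 ^ (m + 1) := by
  induction m with
  | zero => simp [Sb]
  | succ m ih =>
    have h : Sb (m + 1) = Sb m + 2 * 8 ^ (m + 1) := by
      unfold Sb
      rw [Finset.sum_Icc_succ_top (by omega)]
      ring
    have h8 : (0:ℤ) < 8 ^ (m + 1) := by positivity
    calc Sb (m + 1) = Sb m + 2 * 8 ^ (m + 1) := h
      _ < 8 ^ (m + 1) + 2 * 8 ^ (m + 1) := by linarith
      _ ≤ 8 ^ (m + 2) := by rw [pow_succ 8 (m+1)]; linarith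

lemma key (n : ℕ) (s t : ℝ) (m : ℕ) :
    ∃ c : ℤ → ℂ, c 0 = 1 ∧ (∀ k, c k ≠ 0 → |k| ≤ Sb m) ∧
      ∀ θ : ℝ, (∏ j ∈ Finset.Icc 1 m,
          ((1 + Complex.I * s * Real.sin (2 * π * 8 ^ j * θ) / Real.sqrt n) *
           (1 + Complex.I * t * Real.cos (2 * π * 8 ^ j * θ) / Real.sqrt n)))
        = ∑ k ∈ Finset.Icc (-(Sb m)) (Sb m), c k * ee k θ := by
  induction m with
  | zero =>
    refine ⟨fun k => if k = 0 then 1 else 0, by simp, ?_, ?_⟩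
    · intro k hk
      rcases eq_or_ne k 0 with rfl | h
      · simpa using Sb_nonneg 0
      · simp [h] at hk
    · intro θ
      simp [Sb, ee_zero]
  | succ m ih =>
    obtain ⟨c, hc0, hsupp, hrep⟩ := ih
    have hSF : Sb m < 8 ^ (m + 1) := Sb_lt m
    have hF0 : (0:ℤ) < 8 ^ (m + 1) := by positivity
    have hSb1 : Sb (m + 1) = Sb m + 2 * 8 ^ (m + 1) := by
      unfold Sb
      rw [Finset.sum_Icc_succ_top (by omega)]
      ring
    have hS0 : (0:ℤ) ≤ Sb m := Sb_nonneg m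
    refine ⟨fun k => ∑ ε ∈ Finset.Icc (-2:ℤ) 2, coeffD n s t ε * c (k - ε * 8 ^ (m + 1)),
      ?_, ?_, ?_⟩
    · -- value at 0
      dsimp only
      rw [Finset.sum_eq_single 0]
      · simp [coeffD_zero, hc0]
      · intro ε hε hne
        have hcz : c (0 - ε * 8 ^ (m + 1)) = 0 := by
          by_contra h
          have h2 := hsupp _ h
          rw [zero_sub, abs_neg, abs_mul] at h2
          have h1 : (1:ℤ) ≤ |ε| := Int.one_le_abs hne
          have : |(8:ℤ) ^ (m + 1)| = 8 ^ (m + 1) := abs_of_pos hF0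
          nlinarith
        rw [zero_sub] at hcz
        simp [hcz]
      · intro h; exact absurd (by decide) h
    · -- support bound
      intro k hk
      dsimp only at hk
      by_contra hgt
      push_neg at hgt
      apply hk
      apply Finset.sum_eq_zero
      intro ε hε
      have hε2 : |ε| ≤ 2 := by
        rw [Finset.mem_Icc] at hε; rw [abs_le]; exact hε
      have hcz : c (k - ε * 8 ^ (m + 1)) = 0 := by
        by_contra h
        have h2 := hsupp _ h
        have h3 : |k| - |ε * 8 ^ (m + 1)| ≤ |k - ε * 8 ^ (m + 1)| := abs_sub_abs_le_abs_sub _ _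
        have h4 : |ε * 8 ^ (m + 1)| ≤ 2 * 8 ^ (m + 1) := by
          rw [abs_mul, abs_of_pos hF0]
          nlinarith
        rw [hSb1] at hgt
        omega
      simp [hcz]
    · -- representation
      intro θ
      rw [Finset.prod_Icc_succ_top (by omega : 1 ≤ m + 1), hrep θ, factor_eq n s t (m + 1) θ]
      have hstep : ∀ ε ∈ Finset.Icc (-2:ℤ) 2,
          ∑ k ∈ Finset.Icc (-(Sb (m+1))) (Sb (m+1)),
              coeffD n s t ε * c (k - ε * 8 ^ (m + 1)) * ee k θ
          = ∑ k ∈ Finset.Icc (-(Sb m)) (Sb m),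
              c k * ee k θ * (coeffD n s t ε * ee (ε * 8 ^ (m + 1)) θ) := by
        intro ε hε
        have hε2 : |ε| ≤ 2 := by
          rw [Finset.mem_Icc] at hε; rw [abs_le]; exact hε
        have hεF : |ε * 8 ^ (m + 1)| ≤ 2 * 8 ^ (m + 1) := by
          rw [abs_mul, abs_of_pos hF0]; nlinarith
        have himg : (Finset.Icc (-(Sb m)) (Sb m)).image (· + ε * 8 ^ (m + 1))
            ⊆ Finset.Icc (-(Sb (m+1))) (Sb (m+1)) := by
          intro x hx
          simp only [Finset.mem_image, Finset.mem_Icc] at hx ⊢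
          obtain ⟨k, hk, rfl⟩ := hx
          rw [abs_le] at hεF
          rw [hSb1]
          omega
        have hvanish : ∀ x ∈ Finset.Icc (-(Sb (m+1))) (Sb (m+1)),
            x ∉ (Finset.Icc (-(Sb m)) (Sb m)).image (· + ε * 8 ^ (m + 1)) →
            coeffD n s t ε * c (x - ε * 8 ^ (m + 1)) * ee x θ = 0 := by
          intro x _ hx
          have hcz : c (x - ε * 8 ^ (m + 1)) = 0 := by
            by_contra h
            apply hx
            simp only [Finset.mem_image]
            refine ⟨x - ε * 8 ^ (m + 1), ?_, by ring⟩
            rw [Finset.mem_Icc, ← abs_le]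
            exact hsupp _ h
          simp [hcz]
        rw [← Finset.sum_subset himg hvanish]
        rw [Finset.sum_image (fun x _ y _ h => by omega)]
        apply Finset.sum_congr rfl
        intro k _
        rw [add_sub_cancel_right, ee_add]
        ring
      calc (∑ k ∈ Finset.Icc (-(Sb m)) (Sb m), c k * ee k θ) *
            ∑ ε ∈ Finset.Icc (-2:ℤ) 2, coeffD n s t ε * ee (ε * 8 ^ (m + 1)) θ
          = ∑ ε ∈ Finset.Icc (-2:ℤ) 2, ∑ k ∈ Finset.Icc (-(Sb m)) (Sb m),
              c k * ee k θ * (coeffD n s t ε * ee (ε * 8 ^ (m + 1)) θ) := by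
            rw [Finset.sum_mul_sum, Finset.sum_comm]
        _ = ∑ ε ∈ Finset.Icc (-2:ℤ) 2, ∑ k ∈ Finset.Icc (-(Sb (m+1))) (Sb (m+1)),
              coeffD n s t ε * c (k - ε * 8 ^ (m + 1)) * ee k θ :=
            (Finset.sum_congr rfl fun ε hε => (hstep ε hε).symm)
        _ = ∑ k ∈ Finset.Icc (-(Sb (m+1))) (Sb (m+1)),
              (∑ ε ∈ Finset.Icc (-2:ℤ) 2, coeffD n s t ε * c (k - ε * 8 ^ (m + 1))) * ee k θ := by
            rw [Finset.sum_comm]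
            simp_rw [Finset.sum_mul]

theorem integral_lacunaryProd_eq_one (n : ℕ) (hn : 1 ≤ n) (s t : ℝ) :
    ∫ θ in (0:ℝ)..1, lacunaryProd n s t θ = 1 := by
  obtain ⟨c, hc0, hsupp, hrep⟩ := key n s t n
  have hlac : ∀ θ : ℝ, lacunaryProd n s t θ
      = ∑ k ∈ Finset.Icc (-(Sb n)) (Sb n), c k * ee k θ := by
    intro θ
    rw [← hrep θ, lacunaryProd, ← Finset.prod_mul_distrib]
  simp_rw [hlac]
  rw [intervalIntegral.integral_finset_sum]
  · have : ∀ k ∈ Finset.Icc (-(Sb n)) (Sb n),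
        ∫ θ in (0:ℝ)..1, c k * ee k θ = if k = 0 then c k else 0 := by
      intro k _
      rw [intervalIntegral.integral_const_mul, integral_ee]
      split <;> simp
    rw [Finset.sum_congr rfl this, Finset.sum_ite_eq' _ (0:ℤ) c]
    rw [if_pos, hc0]
    rw [Finset.mem_Icc]
    constructor
    · linarith [Sb_nonneg n]
    · exact Sb_nonneg n
  · intro k _
    exact ((continuous_const.mul (continuous_ee k)).intervalIntegrable _ _)
end

section
/- For every integer n ≥ 1, all real s, t, and every θ ∈ [0,1], the modulus of αₙ(s,t,θ) = Π_{j=1}^n (1 + i·s·sin(2π·8^j·θ)/√n) · Π_{j=1}^n (1 + i·t·cos(2π·8^j·θ)/√n) satisfies |αₙ(s,t,θ)| ≤ exp( (s²+t²)/4 + Σ_{j=1}^n (t²−s²)·cos(4π·8^j·θ)/(4n) ). -/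
open MeasureTheory
open scoped Real

lemma abs_one_add_I_mul_le (x : ℝ) :
    ‖1 + Complex.I * x‖ ≤ Real.exp (x ^ 2 / 2) := by
  have h1 : ‖1 + Complex.I * x‖ = Real.sqrt (1 + x ^ 2) := by
    rw [Complex.norm_def, Complex.normSq_apply]
    simp
    ring_nf
  rw [h1]
  have h2 : (1 : ℝ) + x ^ 2 ≤ Real.exp (x ^ 2) := by
    have := Real.add_one_le_exp (x ^ 2); linarith
  calc Real.sqrt (1 + x ^ 2) ≤ Real.sqrt (Real.exp (x ^ 2)) := Real.sqrt_le_sqrt h2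
    _ = Real.exp (x ^ 2 / 2) := (Real.exp_half _).symm

theorem abs_lacunaryProd_le (n : ℕ) (hn : 1 ≤ n) (s t : ℝ) (θ : ℝ)
    (hθ : θ ∈ Set.Icc (0:ℝ) 1) :
    ‖lacunaryProd n s t θ‖ ≤
      Real.exp ((s ^ 2 + t ^ 2) / 4 +
        ∑ j ∈ Finset.Icc 1 n, (t ^ 2 - s ^ 2) * Real.cos (4 * π * 8 ^ j * θ) / (4 * n)) := by
  have hn0 : (0 : ℝ) < (n : ℝ) := by exact_mod_cast hn
  have hs : Real.sqrt n ^ 2 = (n : ℝ) := Real.sq_sqrt (le_of_lt hn0)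
  have hsne : Real.sqrt n ≠ 0 := by positivity
  set A : ℕ → ℝ := fun j => 2 * π * 8 ^ j * θ with hA
  have hfac1 : ∀ j, (1 + Complex.I * s * Real.sin (A j) / Real.sqrt n : ℂ)
      = 1 + Complex.I * ((s * Real.sin (A j) / Real.sqrt n : ℝ) : ℂ) := by
    intro j; push_cast; ring
  have hfac2 : ∀ j, (1 + Complex.I * t * Real.cos (A j) / Real.sqrt n : ℂ)
      = 1 + Complex.I * ((t * Real.cos (A j) / Real.sqrt n : ℝ) : ℂ) := by
    intro j; push_cast; ring
  have hbound : ‖lacunaryProd n s t θ‖ ≤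
      Real.exp ((∑ j ∈ Finset.Icc 1 n, (s * Real.sin (A j) / Real.sqrt n) ^ 2 / 2)
        + (∑ j ∈ Finset.Icc 1 n, (t * Real.cos (A j) / Real.sqrt n) ^ 2 / 2)) := by
    rw [lacunaryProd, norm_mul, norm_prod, norm_prod, Real.exp_add, Real.exp_sum, Real.exp_sum]
    apply mul_le_mul
    · apply Finset.prod_le_prod (fun j _ => by positivity)
      intro j _; rw [hfac1 j]; exact abs_one_add_I_mul_le _
    · apply Finset.prod_le_prod (fun j _ => by positivity)
      intro j _; rw [hfac2 j]; exact abs_one_add_I_mul_le _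
    · positivity
    · positivity
  refine hbound.trans (le_of_eq ?_)
  congr 1
  have key : ∀ j, (s * Real.sin (A j) / Real.sqrt n) ^ 2 / 2
      + (t * Real.cos (A j) / Real.sqrt n) ^ 2 / 2
      = (s ^ 2 + t ^ 2) / (4 * n) + (t ^ 2 - s ^ 2) * Real.cos (4 * π * 8 ^ j * θ) / (4 * n) := by
    intro j
    have hc : Real.cos (A j) ^ 2 = 1 / 2 + Real.cos (2 * A j) / 2 := Real.cos_sq (A j)
    have hsin : Real.sin (A j) ^ 2 = 1 - Real.cos (A j) ^ 2 := Real.sin_sq (A j)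
    have harg : 2 * A j = 4 * π * 8 ^ j * θ := by rw [hA]; ring
    rw [div_pow, div_pow, hs, mul_pow, mul_pow, hsin, hc, harg]
    field_simp
    ring
  rw [← Finset.sum_add_distrib]
  rw [Finset.sum_congr rfl (fun j _ => key j), Finset.sum_add_distrib,
    Finset.sum_const, Nat.card_Icc]
  simp only [Nat.add_sub_cancel, nsmul_eq_mul]
  congr 1
  field_simp
end

section
/- For every integer n ≥ 1, ∫₀¹ (Σ_{j=1}^n cos(4π·8^j·θ))⁴ dθ ≤ n². -/
open MeasureTheory
open scoped Real

/- ### Number theory: powers of 8 -/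

private lemma pow8_fact (x : ℕ) :
    (x = 0 ∧ (8:ℕ)^x = 1) ∨ (0 < x ∧ (8:ℕ)^x = 8 * 8^(x-1) ∧ 1 ≤ (8:ℕ)^(x-1)) := by
  rcases x with _ | x
  · left; simp
  · right
    exact ⟨Nat.succ_pos _, by rw [Nat.add_sub_cancel, pow_succ, Nat.mul_comm],
      Nat.one_le_pow _ _ (by norm_num)⟩

private lemma pow8_inj {x y : ℕ} (h : (8:ℕ)^x = 8^y) : x = y :=
  Nat.pow_right_injective (by norm_num) h

private lemma L1aux : ∀ s a b c d : ℕ, a + b + c + d ≤ s →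
    (8:ℕ)^a + 8^b + 8^c ≠ 8^d := by
  intro s
  induction s with
  | zero =>
    intro a b c d hs h
    have ha := pow8_fact a; have hb := pow8_fact b
    have hc := pow8_fact c; have hd := pow8_fact d
    omega
  | succ s ih =>
    intro a b c d hs h
    have ha := pow8_fact a; have hb := pow8_fact b
    have hc := pow8_fact c; have hd := pow8_fact d
    have key : 0 < a ∧ 0 < b ∧ 0 < c ∧ 0 < d ∧
        (8:ℕ)^(a-1) + 8^(b-1) + 8^(c-1) = 8^(d-1) := by omega
    exact ih (a-1) (b-1) (c-1) (d-1) (by omega) key.2.2.2.2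

private lemma L1 (a b c d : ℕ) : (8:ℕ)^a + 8^b + 8^c ≠ 8^d :=
  L1aux (a+b+c+d) a b c d le_rfl

private lemma L2aux : ∀ s a b c d : ℕ, a + b + c + d ≤ s →
    (8:ℕ)^a + 8^b = 8^c + 8^d → (a = c ∧ b = d) ∨ (a = d ∧ b = c) := by
  intro s
  induction s with
  | zero => intro a b c d hs h; left; omega
  | succ s ih =>
    intro a b c d hs h
    have ha := pow8_fact a; have hb := pow8_fact b
    have hc := pow8_fact c; have hd := pow8_fact d
    have key : ((8:ℕ)^a = 8^c ∧ (8:ℕ)^b = 8^d) ∨ ((8:ℕ)^a = 8^d ∧ (8:ℕ)^b = 8^c) ∨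
        (0 < a ∧ 0 < b ∧ 0 < c ∧ 0 < d ∧
          (8:ℕ)^(a-1) + 8^(b-1) = 8^(c-1) + 8^(d-1)) := by omega
    rcases key with ⟨h1, h2⟩ | ⟨h1, h2⟩ | ⟨h1, h2, h3, h4, h5⟩
    · exact Or.inl ⟨pow8_inj h1, pow8_inj h2⟩
    · exact Or.inr ⟨pow8_inj h1, pow8_inj h2⟩
    · rcases ih (a-1) (b-1) (c-1) (d-1) (by omega) h5 with ⟨e1, e2⟩ | ⟨e1, e2⟩
      · left; omega
      · right; omega

private lemma L2 (a b c d : ℕ) (h : (8:ℕ)^a + 8^b = 8^c + 8^d) :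
    (a = c ∧ b = d) ∨ (a = d ∧ b = c) :=
  L2aux (a+b+c+d) a b c d le_rfl h

/- ### Basic integrals -/

private noncomputable def ind (m : ℤ) : ℝ := if m = 0 then 1 else 0
private noncomputable def E (x y : ℕ) : ℝ := if x = y then 1 else 0
private def N (x : ℕ) : ℤ := 2 * 8^x

private lemma int_cos (m : ℤ) : ∫ θ in (0:ℝ)..1, Real.cos (2*π*m*θ) = ind m := by
  rcases eq_or_ne m 0 with h | h
  · simp [h, ind]
  · have hc : (2*π*(m:ℝ)) ≠ 0 := by
      refine mul_ne_zero (mul_ne_zero two_ne_zero Real.pi_ne_zero) ?_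
      exact_mod_cast h
    rw [show (fun θ : ℝ => Real.cos (2*π*m*θ)) = fun θ : ℝ => Real.cos ((2*π*m)*θ) from rfl,
      intervalIntegral.integral_comp_mul_left _ hc, ind, if_neg h]
    rw [integral_cos]
    have h1 : Real.sin (2*π*(m:ℝ)*1) = 0 := by
      rw [show 2*π*(m:ℝ)*1 = ((2*m : ℤ) : ℝ) * π by push_cast; ring]
      exact Real.sin_int_mul_pi _
    rw [mul_zero, h1, Real.sin_zero, sub_zero, smul_zero]

private lemma cos_mul_cos (x y : ℝ) :
    Real.cos x * Real.cos y = (Real.cos (x+y) + Real.cos (x-y))/2 := by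
  rw [Real.cos_add, Real.cos_sub]; ring

private lemma cos4' (p q r s : ℤ) (θ : ℝ) :
    Real.cos (2*π*p*θ) * Real.cos (2*π*q*θ) * (Real.cos (2*π*r*θ) * Real.cos (2*π*s*θ)) =
      (Real.cos (2*π*((p+q+r+s : ℤ) : ℝ)*θ) + Real.cos (2*π*((p+q+r-s : ℤ) : ℝ)*θ)
      + Real.cos (2*π*((p+q-r+s : ℤ) : ℝ)*θ) + Real.cos (2*π*((p+q-r-s : ℤ) : ℝ)*θ)
      + Real.cos (2*π*((p-q+r+s : ℤ) : ℝ)*θ) + Real.cos (2*π*((p-q+r-s : ℤ) : ℝ)*θ)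
      + Real.cos (2*π*((p-q-r+s : ℤ) : ℝ)*θ) + Real.cos (2*π*((p-q-r-s : ℤ) : ℝ)*θ))/8 := by
  have key : ∀ u v : ℤ, Real.cos (2*π*(u : ℝ)*θ) * Real.cos (2*π*(v : ℝ)*θ) =
      (Real.cos (2*π*((u+v : ℤ) : ℝ)*θ) + Real.cos (2*π*((u-v : ℤ) : ℝ)*θ))/2 := by
    intro u v
    rw [cos_mul_cos]
    congr 2 <;> push_cast <;> ring
  rw [key p q, key r s]
  rw [show ((Real.cos (2*π*((p+q : ℤ) : ℝ)*θ) + Real.cos (2*π*((p-q : ℤ) : ℝ)*θ))/2) *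
      ((Real.cos (2*π*((r+s : ℤ) : ℝ)*θ) + Real.cos (2*π*((r-s : ℤ) : ℝ)*θ))/2) =
      (Real.cos (2*π*((p+q : ℤ) : ℝ)*θ) * Real.cos (2*π*((r+s : ℤ) : ℝ)*θ)
      + Real.cos (2*π*((p+q : ℤ) : ℝ)*θ) * Real.cos (2*π*((r-s : ℤ) : ℝ)*θ)
      + Real.cos (2*π*((p-q : ℤ) : ℝ)*θ) * Real.cos (2*π*((r+s : ℤ) : ℝ)*θ)
      + Real.cos (2*π*((p-q : ℤ) : ℝ)*θ) * Real.cos (2*π*((r-s : ℤ) : ℝ)*θ))/4 from by ring,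
    key, key, key, key]
  rw [show p+q+(r+s) = p+q+r+s from by ring, show p+q-(r+s) = p+q-r-s from by ring,
    show p+q+(r-s) = p+q+r-s from by ring, show p+q-(r-s) = p+q-r+s from by ring,
    show p-q+(r+s) = p-q+r+s from by ring, show p-q-(r+s) = p-q-r-s from by ring,
    show p-q+(r-s) = p-q+r-s from by ring, show p-q-(r-s) = p-q-r+s from by ring]
  ring

private lemma cosCont (m : ℤ) : Continuous (fun θ : ℝ => Real.cos (2*π*(m:ℝ)*θ)) :=
  Real.continuous_cos.comp (continuous_const.mul continuous_id)

private lemma cosInt (m : ℤ) :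
    IntervalIntegrable (fun θ : ℝ => Real.cos (2*π*(m:ℝ)*θ)) volume 0 1 :=
  (cosCont m).intervalIntegrable _ _

private lemma term_int (p q r s : ℤ) :
    ∫ θ in (0:ℝ)..1, Real.cos (2*π*p*θ) * Real.cos (2*π*q*θ)
        * (Real.cos (2*π*r*θ) * Real.cos (2*π*s*θ))
    = (ind (p+q+r+s) + ind (p+q+r-s) + ind (p+q-r+s) + ind (p+q-r-s)
      + ind (p-q+r+s) + ind (p-q+r-s) + ind (p-q-r+s) + ind (p-q-r-s))/8 := by
  simp only [cos4']
  rw [intervalIntegral.integral_div]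
  rw [intervalIntegral.integral_add (((((((cosInt _).add (cosInt _)).add (cosInt _)).add
      (cosInt _)).add (cosInt _)).add (cosInt _)).add (cosInt _)) (cosInt _),
    intervalIntegral.integral_add ((((((cosInt _).add (cosInt _)).add (cosInt _)).add
      (cosInt _)).add (cosInt _)).add (cosInt _)) (cosInt _),
    intervalIntegral.integral_add (((((cosInt _).add (cosInt _)).add (cosInt _)).add
      (cosInt _)).add (cosInt _)) (cosInt _),
    intervalIntegral.integral_add ((((cosInt _).add (cosInt _)).add (cosInt _)).add
      (cosInt _)) (cosInt _),
    intervalIntegral.integral_add (((cosInt _).add (cosInt _)).add (cosInt _)) (cosInt _),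
    intervalIntegral.integral_add ((cosInt _).add (cosInt _)) (cosInt _),
    intervalIntegral.integral_add (cosInt _) (cosInt _)]
  rw [int_cos, int_cos, int_cos, int_cos, int_cos, int_cos, int_cos, int_cos]

/- ### Per-term bounds -/

private lemma ind_zero_of {m : ℤ} (h : m ≠ 0) : ind m = 0 := if_neg h

private lemma E_nonneg (x y : ℕ) : 0 ≤ E x y := by unfold E; split <;> norm_num

private lemma pos_pat (i j k l : ℕ) : ind (N i + N j + N k + N l) = 0 := by
  apply ind_zero_of
  have h1 : (0:ℤ) < 2 * 8^i := by positivity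
  have h2 : (0:ℤ) < 2 * 8^j := by positivity
  have h3 : (0:ℤ) < 2 * 8^k := by positivity
  have h4 : (0:ℤ) < 2 * 8^l := by positivity
  unfold N; omega

private lemma one_neg_pat (i j k l : ℕ) : ind (N i + N j + N k - N l) = 0 := by
  apply ind_zero_of
  intro hz
  have hnat : (8:ℕ)^i + 8^j + 8^k = 8^l := by
    have : ((8:ℤ)^i + 8^j + 8^k : ℤ) = 8^l := by unfold N at hz; linarith
    exact_mod_cast this
  exact L1 _ _ _ _ hnat

private lemma neg_pat (i j k l : ℕ) : ind (N i - N j - N k - N l) = 0 := by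
  apply ind_zero_of
  intro hz
  have hnat : (8:ℕ)^j + 8^k + 8^l = 8^i := by
    have : ((8:ℤ)^j + 8^k + 8^l : ℤ) = 8^i := by unfold N at hz; linarith
    exact_mod_cast this
  exact L1 _ _ _ _ hnat

private lemma pair_pat (a b c d : ℕ) :
    ind (N a + N b - N c - N d) ≤ E a c * E b d + E a d * E b c := by
  by_cases hz : N a + N b - N c - N d = 0
  · have hnat : (8:ℕ)^a + 8^b = 8^c + 8^d := by
      have : ((8:ℤ)^a + 8^b : ℤ) = 8^c + 8^d := by unfold N at hz; linarith
      exact_mod_cast this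
    rcases L2 _ _ _ _ hnat with ⟨h1, h2⟩ | ⟨h1, h2⟩
    · have he : E a c * E b d = 1 := by unfold E; rw [if_pos h1, if_pos h2]; norm_num
      have h0 : 0 ≤ E a d * E b c := mul_nonneg (E_nonneg _ _) (E_nonneg _ _)
      unfold ind; rw [if_pos hz]; linarith
    · have he : E a d * E b c = 1 := by unfold E; rw [if_pos h1, if_pos h2]; norm_num
      have h0 : 0 ≤ E a c * E b d := mul_nonneg (E_nonneg _ _) (E_nonneg _ _)
      unfold ind; rw [if_pos hz]; linarith
  · unfold ind; rw [if_neg hz]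
    have h0 : 0 ≤ E a c * E b d := mul_nonneg (E_nonneg _ _) (E_nonneg _ _)
    have h1 : 0 ≤ E a d * E b c := mul_nonneg (E_nonneg _ _) (E_nonneg _ _)
    linarith

private lemma quad_bound (i j k l : ℕ) :
    (ind (N i + N j + N k + N l) + ind (N i + N j + N k - N l) + ind (N i + N j - N k + N l)
      + ind (N i + N j - N k - N l)
      + ind (N i - N j + N k + N l) + ind (N i - N j + N k - N l) + ind (N i - N j - N k + N l)
      + ind (N i - N j - N k - N l))/8
    ≤ (E i k * E j l + E i l * E j k + E i j * E k l)/4 := by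
  have h1 := pos_pat i j k l
  have h2 := one_neg_pat i j k l
  have h3 : ind (N i + N j - N k + N l) = 0 := by
    rw [show N i + N j - N k + N l = N i + N j + N l - N k from by ring]
    exact one_neg_pat i j l k
  have h5 : ind (N i - N j + N k + N l) = 0 := by
    rw [show N i - N j + N k + N l = N i + N k + N l - N j from by ring]
    exact one_neg_pat i k l j
  have h8 := neg_pat i j k l
  have h4 : ind (N i + N j - N k - N l) ≤ E i k * E j l + E i l * E j k := pair_pat i j k l
  have h6 : ind (N i - N j + N k - N l) ≤ E i j * E k l + E i l * E k j := by
    rw [show N i - N j + N k - N l = N i + N k - N j - N l from by ring]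
    exact pair_pat i k j l
  have h7 : ind (N i - N j - N k + N l) ≤ E i j * E l k + E i k * E l j := by
    rw [show N i - N j - N k + N l = N i + N l - N j - N k from by ring]
    exact pair_pat i l j k
  have es1 : E k j = E j k := by unfold E; simp [eq_comm]
  have es2 : E l k = E k l := by unfold E; simp [eq_comm]
  have es3 : E l j = E j l := by unfold E; simp [eq_comm]
  rw [es1] at h6; rw [es2, es3] at h7
  linarith

/- ### Main theorem -/

theorem integral_cos_sum_pow_four_le (n : ℕ) (hn : 1 ≤ n) :
    ∫ θ in (0:ℝ)..1, (∑ j ∈ Finset.Icc 1 n, Real.cos (4 * π * 8 ^ j * θ)) ^ 4 ≤ (n : ℝ) ^ 2 := by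
  set F := Finset.Icc 1 n with hF
  have hcard : F.card = n := by rw [hF, Nat.card_Icc]; omega
  have harg : ∀ (j : ℕ) (θ : ℝ), (4 * π * 8 ^ j * θ : ℝ) = 2*π*((N j : ℤ) : ℝ)*θ := by
    intro j θ; unfold N; push_cast; ring
  have expand : ∀ θ : ℝ, (∑ j ∈ F, Real.cos (4 * π * 8 ^ j * θ))^4
      = ∑ i ∈ F, ∑ k ∈ F, ∑ j ∈ F, ∑ l ∈ F,
          Real.cos (2*π*((N i : ℤ) : ℝ)*θ) * Real.cos (2*π*((N j : ℤ) : ℝ)*θ) *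
            (Real.cos (2*π*((N k : ℤ) : ℝ)*θ) * Real.cos (2*π*((N l : ℤ) : ℝ)*θ)) := by
    intro θ
    have h0 : (∑ j ∈ F, Real.cos (4 * π * 8 ^ j * θ))
        = ∑ j ∈ F, Real.cos (2*π*((N j : ℤ) : ℝ)*θ) :=
      Finset.sum_congr rfl (fun j _ => by rw [harg])
    rw [h0]
    rw [show (∑ j ∈ F, Real.cos (2*π*((N j : ℤ) : ℝ)*θ))^4 =
      ((∑ j ∈ F, Real.cos (2*π*((N j : ℤ) : ℝ)*θ)) * ∑ j ∈ F, Real.cos (2*π*((N j : ℤ) : ℝ)*θ)) *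
      ((∑ j ∈ F, Real.cos (2*π*((N j : ℤ) : ℝ)*θ)) * ∑ j ∈ F, Real.cos (2*π*((N j : ℤ) : ℝ)*θ))
      from by ring]
    simp only [Finset.sum_mul_sum]
  have cont4 : ∀ i j k l : ℕ, Continuous (fun θ : ℝ =>
      Real.cos (2*π*((N i : ℤ) : ℝ)*θ) * Real.cos (2*π*((N j : ℤ) : ℝ)*θ) *
        (Real.cos (2*π*((N k : ℤ) : ℝ)*θ) * Real.cos (2*π*((N l : ℤ) : ℝ)*θ))) :=
    fun i j k l => ((cosCont (N i)).mul (cosCont (N j))).mul ((cosCont (N k)).mul (cosCont (N l)))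
  have cont3 : ∀ i k j : ℕ, Continuous (fun θ : ℝ => ∑ l ∈ F,
      Real.cos (2*π*((N i : ℤ) : ℝ)*θ) * Real.cos (2*π*((N j : ℤ) : ℝ)*θ) *
        (Real.cos (2*π*((N k : ℤ) : ℝ)*θ) * Real.cos (2*π*((N l : ℤ) : ℝ)*θ))) :=
    fun i k j => continuous_finset_sum _ (fun l _ => cont4 i j k l)
  have cont2 : ∀ i k : ℕ, Continuous (fun θ : ℝ => ∑ j ∈ F, ∑ l ∈ F,
      Real.cos (2*π*((N i : ℤ) : ℝ)*θ) * Real.cos (2*π*((N j : ℤ) : ℝ)*θ) *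
        (Real.cos (2*π*((N k : ℤ) : ℝ)*θ) * Real.cos (2*π*((N l : ℤ) : ℝ)*θ))) :=
    fun i k => continuous_finset_sum _ (fun j _ => cont3 i k j)
  have cont1 : ∀ i : ℕ, Continuous (fun θ : ℝ => ∑ k ∈ F, ∑ j ∈ F, ∑ l ∈ F,
      Real.cos (2*π*((N i : ℤ) : ℝ)*θ) * Real.cos (2*π*((N j : ℤ) : ℝ)*θ) *
        (Real.cos (2*π*((N k : ℤ) : ℝ)*θ) * Real.cos (2*π*((N l : ℤ) : ℝ)*θ))) :=
    fun i => continuous_finset_sum _ (fun k _ => cont2 i k)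
  have hEsum : ∀ x, x ∈ F → ∑ y ∈ F, E x y = 1 := by
    intro x hx
    unfold E
    rw [Finset.sum_ite_eq F x (fun _ => (1:ℝ)), if_pos hx]
  have hEsum' : ∀ y, y ∈ F → ∑ x ∈ F, E x y = 1 := by
    intro y hy
    unfold E
    rw [Finset.sum_ite_eq' F y (fun _ => (1:ℝ)), if_pos hy]
  calc ∫ θ in (0:ℝ)..1, (∑ j ∈ F, Real.cos (4 * π * 8 ^ j * θ)) ^ 4
      = ∫ θ in (0:ℝ)..1, ∑ i ∈ F, ∑ k ∈ F, ∑ j ∈ F, ∑ l ∈ F,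
          Real.cos (2*π*((N i : ℤ) : ℝ)*θ) * Real.cos (2*π*((N j : ℤ) : ℝ)*θ) *
            (Real.cos (2*π*((N k : ℤ) : ℝ)*θ) * Real.cos (2*π*((N l : ℤ) : ℝ)*θ)) := by
        simp only [expand]
    _ = ∑ i ∈ F, ∑ k ∈ F, ∑ j ∈ F, ∑ l ∈ F, ∫ θ in (0:ℝ)..1,
          Real.cos (2*π*((N i : ℤ) : ℝ)*θ) * Real.cos (2*π*((N j : ℤ) : ℝ)*θ) *
            (Real.cos (2*π*((N k : ℤ) : ℝ)*θ) * Real.cos (2*π*((N l : ℤ) : ℝ)*θ)) := by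
        rw [intervalIntegral.integral_finset_sum
          (fun i _ => ((cont1 i).intervalIntegrable _ _))]
        refine Finset.sum_congr rfl fun i _ => ?_
        rw [intervalIntegral.integral_finset_sum
          (fun k _ => ((cont2 i k).intervalIntegrable _ _))]
        refine Finset.sum_congr rfl fun k _ => ?_
        rw [intervalIntegral.integral_finset_sum
          (fun j _ => ((cont3 i k j).intervalIntegrable _ _))]
        refine Finset.sum_congr rfl fun j _ => ?_
        rw [intervalIntegral.integral_finset_sum
          (fun l _ => ((cont4 i j k l).intervalIntegrable _ _))]
    _ = ∑ i ∈ F, ∑ k ∈ F, ∑ j ∈ F, ∑ l ∈ F,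
          (ind (N i + N j + N k + N l) + ind (N i + N j + N k - N l)
          + ind (N i + N j - N k + N l) + ind (N i + N j - N k - N l)
          + ind (N i - N j + N k + N l) + ind (N i - N j + N k - N l)
          + ind (N i - N j - N k + N l) + ind (N i - N j - N k - N l))/8 :=
        Finset.sum_congr rfl fun i _ => Finset.sum_congr rfl fun k _ =>
          Finset.sum_congr rfl fun j _ => Finset.sum_congr rfl fun l _ =>
            term_int (N i) (N j) (N k) (N l)
    _ ≤ ∑ i ∈ F, ∑ k ∈ F, ∑ j ∈ F, ∑ l ∈ F,
          (E i k * E j l + E i l * E j k + E i j * E k l)/4 := by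
        refine Finset.sum_le_sum fun i _ => Finset.sum_le_sum fun k _ =>
          Finset.sum_le_sum fun j _ => Finset.sum_le_sum fun l _ => quad_bound i j k l
    _ = ∑ i ∈ F, ∑ k ∈ F, ∑ j ∈ F, (E i k + E j k + E i j)/4 := by
        refine Finset.sum_congr rfl fun i hi => Finset.sum_congr rfl fun k hk =>
          Finset.sum_congr rfl fun j hj => ?_
        rw [← Finset.sum_div]
        congr 1
        rw [Finset.sum_add_distrib, Finset.sum_add_distrib, ← Finset.mul_sum,
          ← Finset.sum_mul, ← Finset.mul_sum, hEsum j hj, hEsum i hi, hEsum k hk]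
        ring
    _ = ∑ i ∈ F, ∑ k ∈ F, ((n:ℝ) * E i k + 1 + 1)/4 := by
        refine Finset.sum_congr rfl fun i hi => Finset.sum_congr rfl fun k hk => ?_
        rw [← Finset.sum_div]
        congr 1
        rw [Finset.sum_add_distrib, Finset.sum_add_distrib, Finset.sum_const, hcard,
          nsmul_eq_mul, hEsum' k hk, hEsum i hi]
    _ = ∑ i ∈ F, (3*(n:ℝ))/4 := by
        refine Finset.sum_congr rfl fun i hi => ?_
        rw [← Finset.sum_div]
        congr 1
        rw [Finset.sum_add_distrib, Finset.sum_add_distrib, ← Finset.mul_sum, hEsum i hi,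
          Finset.sum_const, hcard, nsmul_eq_mul]
        ring
    _ = (n:ℝ) * ((3*(n:ℝ))/4) := by
        rw [Finset.sum_const, hcard, nsmul_eq_mul]
    _ ≤ (n:ℝ)^2 := by nlinarith [sq_nonneg (n:ℝ)]
end

section
/- For every integer n ≥ 1, the Lebesgue measure of the set {x ∈ [0,1] : |Σ_{j=1}^n cos(4π·8^j·x)| ≥ n^{3/4}} is at most 1/n. -/
open MeasureTheory
open scoped Real ENNReal

lemma intA (m : ℤ) : ∫ x in (0:ℝ)..1, Real.cos (2 * π * m * x) = if m = 0 then 1 else 0 := by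
  rcases eq_or_ne m 0 with h | h
  · simp [h]
  · rw [if_neg h]
    have hm : (m:ℝ) ≠ 0 := Int.cast_ne_zero.mpr h
    have hc0 : (2 * π * m : ℝ) ≠ 0 := by
      have := Real.pi_ne_zero; positivity
    rw [intervalIntegral.integral_comp_mul_left Real.cos hc0]
    rw [integral_cos]
    have h1 : Real.sin (2 * π * m * 1) = 0 := by
      have := Real.sin_int_mul_pi (2 * m)
      rw [show (2 * π * m * 1 : ℝ) = ((2 * m : ℤ) : ℝ) * π by push_cast; ring]
      exact this
    rw [h1]
    norm_num

lemma cmc (x y : ℝ) : Real.cos x * Real.cos y = (Real.cos (x - y) + Real.cos (x + y)) / 2 := by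
  rw [Real.cos_sub, Real.cos_add]; ring

lemma intB (u v : ℤ) : ∫ x in (0:ℝ)..1, Real.cos (2 * π * u * x) * Real.cos (2 * π * v * x)
    = (if u - v = 0 then (1:ℝ)/2 else 0) + (if u + v = 0 then (1:ℝ)/2 else 0) := by
  have key : ∀ x : ℝ, Real.cos (2 * π * u * x) * Real.cos (2 * π * v * x)
      = Real.cos (2 * π * (u - v : ℤ) * x) / 2 + Real.cos (2 * π * (u + v : ℤ) * x) / 2 := by
    intro x
    rw [cmc]
    rw [show (2 * π * u * x - 2 * π * v * x : ℝ) = 2 * π * ((u - v : ℤ) : ℝ) * x by push_cast; ring]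
    rw [show (2 * π * u * x + 2 * π * v * x : ℝ) = 2 * π * ((u + v : ℤ) : ℝ) * x by push_cast; ring]
    ring
  rw [intervalIntegral.integral_congr (fun x _ => key x)]
  have i1 : IntervalIntegrable (fun x => Real.cos (2 * π * (u - v : ℤ) * x) / 2) volume 0 1 := by
    apply Continuous.intervalIntegrable; continuity
  have i2 : IntervalIntegrable (fun x => Real.cos (2 * π * (u + v : ℤ) * x) / 2) volume 0 1 := by
    apply Continuous.intervalIntegrable; continuity
  rw [intervalIntegral.integral_add i1 i2, intervalIntegral.integral_div, intervalIntegral.integral_div,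
    intA, intA]
  split_ifs <;> norm_num

lemma no3 (a b c d : ℕ) : 8^a ≠ 8^b + 8^c + 8^d := by
  intro h
  set m := max b (max c d) with hm
  have hb : 8^b ≤ 8^m := Nat.pow_le_pow_right (by norm_num) (le_max_left _ _)
  have hc : 8^c ≤ 8^m := Nat.pow_le_pow_right (by norm_num) ((le_max_left _ _).trans (le_max_right _ _))
  have hd : 8^d ≤ 8^m := Nat.pow_le_pow_right (by norm_num) ((le_max_right _ _).trans (le_max_right _ _))
  have h1b : 1 ≤ (8:ℕ)^b := Nat.one_le_pow _ _ (by norm_num)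
  have h1c : 1 ≤ (8:ℕ)^c := Nat.one_le_pow _ _ (by norm_num)
  have h1d : 1 ≤ (8:ℕ)^d := Nat.one_le_pow _ _ (by norm_num)
  have hma : m < a := by
    rw [← Nat.pow_lt_pow_iff_right (by norm_num : 1 < 8)]
    rcases max_cases b (max c d) with ⟨he, _⟩ | ⟨he, _⟩
    · rw [hm, he]; linarith
    · rw [hm, he]; rcases max_cases c d with ⟨hf, _⟩ | ⟨hf, _⟩ <;> rw [hf] <;> linarith
  have h8 : 8^(m+1) ≤ 8^a := Nat.pow_le_pow_right (by norm_num) hma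
  rw [pow_succ] at h8
  linarith

lemma pairAux (a b c d : ℕ) (hab : a ≤ b) (hcd : c ≤ d) (h : 8^a + 8^b = 8^c + 8^d) :
    a = c ∧ b = d := by
  have h1a : 1 ≤ (8:ℕ)^a := Nat.one_le_pow _ _ (by norm_num)
  have h1b : 1 ≤ (8:ℕ)^b := Nat.one_le_pow _ _ (by norm_num)
  have h1c : 1 ≤ (8:ℕ)^c := Nat.one_le_pow _ _ (by norm_num)
  have h1d : 1 ≤ (8:ℕ)^d := Nat.one_le_pow _ _ (by norm_num)
  have e1 : (8:ℕ)^c ≤ 8^d := Nat.pow_le_pow_right (by norm_num) hcd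
  have e2 : (8:ℕ)^a ≤ 8^b := Nat.pow_le_pow_right (by norm_num) hab
  have hbd : b = d := by
    have k1 : (8:ℕ)^b < 8^(d+1) := by rw [pow_succ]; linarith
    have k2 : (8:ℕ)^d < 8^(b+1) := by rw [pow_succ]; linarith
    rw [Nat.pow_lt_pow_iff_right (by norm_num : 1 < 8)] at k1 k2
    omega
  refine ⟨?_, hbd⟩
  have : (8:ℕ)^a = 8^c := by rw [hbd] at h; omega
  exact Nat.pow_right_injective (by norm_num) this

lemma pairEq {a b c d : ℕ} (h : 8^a + 8^b = 8^c + 8^d) :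
    (a = c ∧ b = d) ∨ (a = d ∧ b = c) := by
  rcases le_total a b with h1 | h1 <;> rcases le_total c d with h2 | h2
  · exact Or.inl (pairAux a b c d h1 h2 h)
  · have := pairAux a b d c h1 h2 (by omega)
    exact Or.inr ⟨this.1, this.2⟩
  · have := pairAux b a c d h1 h2 (by omega)
    exact Or.inr ⟨this.2, this.1⟩
  · have := pairAux b a d c h1 h2 (by omega)
    exact Or.inl ⟨this.2, this.1⟩

lemma intC (a b c d : ℕ) :
    ∫ x in (0:ℝ)..1,
      Real.cos (4 * π * 8 ^ a * x) * Real.cos (4 * π * 8 ^ b * x) *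
        (Real.cos (4 * π * 8 ^ c * x) * Real.cos (4 * π * 8 ^ d * x))
    = ((if 8^a + 8^b = 8^c + 8^d then (1:ℝ) else 0)
        + (if 8^a + 8^c = 8^b + 8^d then (1:ℝ) else 0)
        + (if 8^a + 8^d = 8^b + 8^c then (1:ℝ) else 0)) / 8 := by
  set m1 : ℤ := 2*8^a - 2*8^b with hm1
  set m2 : ℤ := 2*8^a + 2*8^b with hm2
  set m3 : ℤ := 2*8^c - 2*8^d with hm3
  set m4 : ℤ := 2*8^c + 2*8^d with hm4
  have key : ∀ x : ℝ,
      Real.cos (4 * π * 8 ^ a * x) * Real.cos (4 * π * 8 ^ b * x) *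
        (Real.cos (4 * π * 8 ^ c * x) * Real.cos (4 * π * 8 ^ d * x))
      = (1/4) * (Real.cos (2*π*m1*x) * Real.cos (2*π*m3*x)
          + Real.cos (2*π*m1*x) * Real.cos (2*π*m4*x)
          + Real.cos (2*π*m2*x) * Real.cos (2*π*m3*x)
          + Real.cos (2*π*m2*x) * Real.cos (2*π*m4*x)) := by
    intro x
    rw [cmc (4 * π * 8 ^ a * x) (4 * π * 8 ^ b * x), cmc (4 * π * 8 ^ c * x) (4 * π * 8 ^ d * x)]
    rw [show (4 * π * 8 ^ a * x - 4 * π * 8 ^ b * x : ℝ) = 2*π*(m1:ℝ)*x by rw [hm1]; push_cast; ring]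
    rw [show (4 * π * 8 ^ a * x + 4 * π * 8 ^ b * x : ℝ) = 2*π*(m2:ℝ)*x by rw [hm2]; push_cast; ring]
    rw [show (4 * π * 8 ^ c * x - 4 * π * 8 ^ d * x : ℝ) = 2*π*(m3:ℝ)*x by rw [hm3]; push_cast; ring]
    rw [show (4 * π * 8 ^ c * x + 4 * π * 8 ^ d * x : ℝ) = 2*π*(m4:ℝ)*x by rw [hm4]; push_cast; ring]
    ring
  rw [intervalIntegral.integral_congr (fun x _ => key x)]
  have ii : ∀ u v : ℤ, IntervalIntegrable
      (fun x => Real.cos (2*π*u*x) * Real.cos (2*π*v*x)) volume 0 1 := by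
    intro u v
    apply Continuous.intervalIntegrable
    exact (Real.continuous_cos.comp ((continuous_const).mul continuous_id)).mul
      (Real.continuous_cos.comp ((continuous_const).mul continuous_id))
  rw [intervalIntegral.integral_const_mul]
  rw [intervalIntegral.integral_add (((ii m1 m3).add (ii m1 m4)).add (ii m2 m3)) (ii m2 m4),
      intervalIntegral.integral_add ((ii m1 m3).add (ii m1 m4)) (ii m2 m3),
      intervalIntegral.integral_add (ii m1 m3) (ii m1 m4)]
  rw [intB, intB, intB, intB]
  -- now evaluate the integer conditions
  have pos : ∀ x : ℕ, (0:ℤ) < 8^x := fun x => pow_pos (by norm_num) x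
  have c13a : (m1 - m3 = 0) ↔ (8^a + 8^d = 8^b + 8^c) := by
    rw [hm1, hm3, ← Nat.cast_inj (R := ℤ)]
    push_cast
    constructor <;> intro h <;> linarith
  have c13b : (m1 + m3 = 0) ↔ (8^a + 8^c = 8^b + 8^d) := by
    rw [hm1, hm3, ← Nat.cast_inj (R := ℤ)]
    push_cast
    constructor <;> intro h <;> linarith
  have c24a : (m2 - m4 = 0) ↔ (8^a + 8^b = 8^c + 8^d) := by
    rw [hm2, hm4, ← Nat.cast_inj (R := ℤ)]
    push_cast
    constructor <;> intro h <;> linarith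
  have c24b : m2 + m4 ≠ 0 := by
    have := pos a; have := pos b; have := pos c; have := pos d
    rw [hm2, hm4]; push_cast; intro h; linarith
  have c14a : m1 - m4 ≠ 0 := by
    intro h
    apply no3 a b c d
    rw [← Nat.cast_inj (R := ℤ)]; push_cast
    rw [hm1, hm4] at h; push_cast at h; linarith
  have c14b : m1 + m4 ≠ 0 := by
    intro h
    apply no3 b a c d  -- 8^b = 8^a + 8^c + 8^d
    rw [← Nat.cast_inj (R := ℤ)]; push_cast
    rw [hm1, hm4] at h; push_cast at h; linarith
  have c23a : m2 - m3 ≠ 0 := by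
    intro h
    apply no3 c a b d
    rw [← Nat.cast_inj (R := ℤ)]; push_cast
    rw [hm2, hm3] at h; push_cast at h; linarith
  have c23b : m2 + m3 ≠ 0 := by
    intro h
    apply no3 d a b c
    rw [← Nat.cast_inj (R := ℤ)]; push_cast
    rw [hm2, hm3] at h; push_cast at h; linarith
  rw [if_neg c24b, if_neg c14a, if_neg c14b, if_neg c23a, if_neg c23b]
  simp only [c13a, c13b, c24a]
  split_ifs <;> norm_num

lemma termBound (a b c d : ℕ) :
    ((if 8^a + 8^b = 8^c + 8^d then (1:ℝ) else 0)
        + (if 8^a + 8^c = 8^b + 8^d then (1:ℝ) else 0)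
        + (if 8^a + 8^d = 8^b + 8^c then (1:ℝ) else 0)) / 8
    ≤ ((if c = a then (1:ℝ) else 0) * (if d = b then (1:ℝ) else 0)
        + (if d = a then (1:ℝ) else 0) * (if b = c then (1:ℝ) else 0)
        + (if b = a then (1:ℝ) else 0) * (if d = c then (1:ℝ) else 0)) / 4 := by
  have h1 : (if 8^a + 8^b = 8^c + 8^d then (1:ℝ) else 0)
      ≤ (if c = a then (1:ℝ) else 0) * (if d = b then (1:ℝ) else 0)
        + (if d = a then (1:ℝ) else 0) * (if b = c then (1:ℝ) else 0) := by
    by_cases h : 8^a + 8^b = 8^c + 8^d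
    · rw [if_pos h]
      have hd := pairEq h
      clear h
      rcases hd with ⟨rfl, rfl⟩ | ⟨rfl, rfl⟩ <;> split_ifs <;> norm_num at * <;> nlinarith
    · rw [if_neg h]; split_ifs <;> norm_num
  have h2 : (if 8^a + 8^c = 8^b + 8^d then (1:ℝ) else 0)
      ≤ (if b = a then (1:ℝ) else 0) * (if d = c then (1:ℝ) else 0)
        + (if d = a then (1:ℝ) else 0) * (if b = c then (1:ℝ) else 0) := by
    by_cases h : 8^a + 8^c = 8^b + 8^d
    · rw [if_pos h]
      have hd := pairEq h
      clear h
      rcases hd with ⟨rfl, rfl⟩ | ⟨rfl, rfl⟩ <;> split_ifs <;> norm_num at * <;> nlinarith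
    · rw [if_neg h]; split_ifs <;> norm_num
  have h3 : (if 8^a + 8^d = 8^b + 8^c then (1:ℝ) else 0)
      ≤ (if b = a then (1:ℝ) else 0) * (if d = c then (1:ℝ) else 0)
        + (if c = a then (1:ℝ) else 0) * (if d = b then (1:ℝ) else 0) := by
    by_cases h : 8^a + 8^d = 8^b + 8^c
    · rw [if_pos h]
      have hd := pairEq h
      clear h
      rcases hd with ⟨rfl, rfl⟩ | ⟨rfl, rfl⟩ <;> split_ifs <;> norm_num at * <;> nlinarith
    · rw [if_neg h]; split_ifs <;> norm_num
  linarith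

lemma intS (n : ℕ) :
    ∫ x in (0:ℝ)..1, (∑ j ∈ Finset.Icc 1 n, Real.cos (4 * π * 8 ^ j * x))^4 ≤ (n:ℝ)^2 := by
  set F := Finset.Icc 1 n with hF
  have hcont : ∀ a b c d : ℕ, Continuous (fun x : ℝ =>
      Real.cos (4 * π * 8 ^ a * x) * Real.cos (4 * π * 8 ^ b * x) *
        (Real.cos (4 * π * 8 ^ c * x) * Real.cos (4 * π * 8 ^ d * x))) := by
    intro a b c d
    exact ((Real.continuous_cos.comp (continuous_const.mul continuous_id)).mul
      (Real.continuous_cos.comp (continuous_const.mul continuous_id))).mul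
      ((Real.continuous_cos.comp (continuous_const.mul continuous_id)).mul
      (Real.continuous_cos.comp (continuous_const.mul continuous_id)))
  have expand : ∀ x : ℝ, (∑ j ∈ F, Real.cos (4 * π * 8 ^ j * x))^4
      = ∑ a ∈ F, ∑ c ∈ F, ∑ b ∈ F, ∑ d ∈ F,
          Real.cos (4 * π * 8 ^ a * x) * Real.cos (4 * π * 8 ^ b * x) *
            (Real.cos (4 * π * 8 ^ c * x) * Real.cos (4 * π * 8 ^ d * x)) := by
    intro x
    have h1 : (∑ j ∈ F, Real.cos (4 * π * 8 ^ j * x)) ^ 4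
        = ((∑ j ∈ F, Real.cos (4 * π * 8 ^ j * x)) * (∑ j ∈ F, Real.cos (4 * π * 8 ^ j * x)))
          * ((∑ j ∈ F, Real.cos (4 * π * 8 ^ j * x)) * (∑ j ∈ F, Real.cos (4 * π * 8 ^ j * x))) := by
      ring
    rw [h1]
    simp only [Finset.sum_mul_sum]
  rw [intervalIntegral.integral_congr (fun x _ => expand x)]
  have swap : (∫ x in (0:ℝ)..1, ∑ a ∈ F, ∑ c ∈ F, ∑ b ∈ F, ∑ d ∈ F,
        Real.cos (4 * π * 8 ^ a * x) * Real.cos (4 * π * 8 ^ b * x) *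
          (Real.cos (4 * π * 8 ^ c * x) * Real.cos (4 * π * 8 ^ d * x)))
      = ∑ a ∈ F, ∑ c ∈ F, ∑ b ∈ F, ∑ d ∈ F, ∫ x in (0:ℝ)..1,
          Real.cos (4 * π * 8 ^ a * x) * Real.cos (4 * π * 8 ^ b * x) *
            (Real.cos (4 * π * 8 ^ c * x) * Real.cos (4 * π * 8 ^ d * x)) := by
    rw [intervalIntegral.integral_finset_sum (fun a _ => by
      apply Continuous.intervalIntegrable
      exact continuous_finset_sum _ (fun c _ => continuous_finset_sum _ (fun b _ =>
        continuous_finset_sum _ (fun d _ => hcont a b c d))))]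
    refine Finset.sum_congr rfl (fun a _ => ?_)
    rw [intervalIntegral.integral_finset_sum (fun c _ => by
      apply Continuous.intervalIntegrable
      exact continuous_finset_sum _ (fun b _ => continuous_finset_sum _ (fun d _ => hcont a b c d)))]
    refine Finset.sum_congr rfl (fun c _ => ?_)
    rw [intervalIntegral.integral_finset_sum (fun b _ => by
      apply Continuous.intervalIntegrable
      exact continuous_finset_sum _ (fun d _ => hcont a b c d))]
    refine Finset.sum_congr rfl (fun b _ => ?_)
    rw [intervalIntegral.integral_finset_sum (fun d _ =>
      (hcont a b c d).intervalIntegrable _ _)]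
  rw [swap]
  have step : ∀ a ∈ F, ∀ c ∈ F, ∀ b ∈ F, ∀ d ∈ F, (∫ x in (0:ℝ)..1,
        Real.cos (4 * π * 8 ^ a * x) * Real.cos (4 * π * 8 ^ b * x) *
          (Real.cos (4 * π * 8 ^ c * x) * Real.cos (4 * π * 8 ^ d * x)))
      ≤ ((if c = a then (1:ℝ) else 0) * (if d = b then (1:ℝ) else 0)
          + (if d = a then (1:ℝ) else 0) * (if b = c then (1:ℝ) else 0)
          + (if b = a then (1:ℝ) else 0) * (if d = c then (1:ℝ) else 0)) / 4 := by
    intro a _ c _ b _ d _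
    rw [intC a b c d]
    exact termBound a b c d
  have sumle : (∑ a ∈ F, ∑ c ∈ F, ∑ b ∈ F, ∑ d ∈ F, ∫ x in (0:ℝ)..1,
        Real.cos (4 * π * 8 ^ a * x) * Real.cos (4 * π * 8 ^ b * x) *
          (Real.cos (4 * π * 8 ^ c * x) * Real.cos (4 * π * 8 ^ d * x)))
      ≤ ∑ a ∈ F, ∑ c ∈ F, ∑ b ∈ F, ∑ d ∈ F,
          ((if c = a then (1:ℝ) else 0) * (if d = b then (1:ℝ) else 0)
          + (if d = a then (1:ℝ) else 0) * (if b = c then (1:ℝ) else 0)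
          + (if b = a then (1:ℝ) else 0) * (if d = c then (1:ℝ) else 0)) / 4 := by
    refine Finset.sum_le_sum (fun a ha => Finset.sum_le_sum (fun c hc =>
      Finset.sum_le_sum (fun b hb => Finset.sum_le_sum (fun d hd => ?_))))
    exact step a ha c hc b hb d hd
  refine sumle.trans ?_
  have hcard : (F.card : ℝ) = n := by
    have : F.card = n := by rw [hF, Nat.card_Icc]; omega
    exact_mod_cast this
  have e1 : (∑ a ∈ F, ∑ c ∈ F, ∑ b ∈ F, ∑ d ∈ F,
      (if c = a then (1:ℝ) else 0) * (if d = b then (1:ℝ) else 0)) = (n:ℝ)^2 := by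
    simp [Finset.sum_ite_eq', ← Finset.mul_sum, Finset.sum_ite_mem, Finset.inter_self,
      Finset.sum_const]
    rw [← hcard]; ring
  have e2 : (∑ a ∈ F, ∑ c ∈ F, ∑ b ∈ F, ∑ d ∈ F,
      (if d = a then (1:ℝ) else 0) * (if b = c then (1:ℝ) else 0)) = (n:ℝ)^2 := by
    simp [Finset.sum_ite_eq', ← Finset.mul_sum, Finset.sum_ite_mem, Finset.inter_self,
      Finset.sum_const]
    rw [← hcard]; ring
  have e3 : (∑ a ∈ F, ∑ c ∈ F, ∑ b ∈ F, ∑ d ∈ F,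
      (if b = a then (1:ℝ) else 0) * (if d = c then (1:ℝ) else 0)) = (n:ℝ)^2 := by
    simp [Finset.sum_ite_eq', ← Finset.mul_sum, Finset.sum_ite_mem, Finset.inter_self,
      Finset.sum_const]
    rw [← hcard]; ring
  have split : (∑ a ∈ F, ∑ c ∈ F, ∑ b ∈ F, ∑ d ∈ F,
      ((if c = a then (1:ℝ) else 0) * (if d = b then (1:ℝ) else 0)
          + (if d = a then (1:ℝ) else 0) * (if b = c then (1:ℝ) else 0)
          + (if b = a then (1:ℝ) else 0) * (if d = c then (1:ℝ) else 0)) / 4)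
      = ((∑ a ∈ F, ∑ c ∈ F, ∑ b ∈ F, ∑ d ∈ F,
          (if c = a then (1:ℝ) else 0) * (if d = b then (1:ℝ) else 0))
        + (∑ a ∈ F, ∑ c ∈ F, ∑ b ∈ F, ∑ d ∈ F,
          (if d = a then (1:ℝ) else 0) * (if b = c then (1:ℝ) else 0))
        + (∑ a ∈ F, ∑ c ∈ F, ∑ b ∈ F, ∑ d ∈ F,
          (if b = a then (1:ℝ) else 0) * (if d = c then (1:ℝ) else 0))) / 4 := by
    simp only [← Finset.sum_div, ← Finset.sum_add_distrib]
  rw [split, e1, e2, e3]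
  nlinarith [sq_nonneg (n:ℝ)]

theorem measure_large_cos_sum_le (n : ℕ) (hn : 1 ≤ n) :
    volume {x : ℝ | x ∈ Set.Icc (0:ℝ) 1 ∧
        (n : ℝ) ^ ((3 : ℝ) / 4) ≤ |∑ j ∈ Finset.Icc 1 n, Real.cos (4 * π * 8 ^ j * x)|} ≤
      1 / (n : ℝ≥0∞) := by
  set S : ℝ → ℝ := fun x => ∑ j ∈ Finset.Icc 1 n, Real.cos (4 * π * 8 ^ j * x) with hS
  have hScont : Continuous S := continuous_finset_sum _
    (fun j _ => Real.continuous_cos.comp (continuous_const.mul continuous_id))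
  set A : Set ℝ := {x : ℝ | x ∈ Set.Icc (0:ℝ) 1 ∧ (n : ℝ) ^ ((3 : ℝ) / 4) ≤ |S x|} with hA
  show volume A ≤ 1 / (n : ℝ≥0∞)
  have hsub : A ⊆ Set.Icc (0:ℝ) 1 := fun x hx => hx.1
  have hpow : ((n:ℝ)^((3:ℝ)/4))^(4:ℕ) = (n:ℝ)^(3:ℕ) := by
    rw [← Real.rpow_natCast ((n:ℝ)^((3:ℝ)/4)) 4, ← Real.rpow_mul (Nat.cast_nonneg n),
      ← Real.rpow_natCast (n:ℝ) 3]
    norm_num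
  have hlb : ∀ x ∈ A, (n:ℝ)^(3:ℕ) ≤ (S x)^4 := by
    intro x hx
    have h2 : ((n:ℝ)^((3:ℝ)/4))^(4:ℕ) ≤ |S x|^(4:ℕ) :=
      pow_le_pow_left₀ (Real.rpow_nonneg (Nat.cast_nonneg n) _) hx.2 4
    rw [hpow] at h2
    calc (n:ℝ)^(3:ℕ) ≤ |S x|^4 := h2
    _ = (S x)^4 := by rw [pow_abs, abs_of_nonneg (by positivity)]
  have hg : IntegrableOn (fun x => (S x)^4) (Set.Icc (0:ℝ) 1) volume :=
    (hScont.pow 4).integrableOn_Icc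
  have l5 : ∫ x in Set.Icc (0:ℝ) 1, (S x)^4 ≤ (n:ℝ)^2 := by
    rw [MeasureTheory.integral_Icc_eq_integral_Ioc,
      ← intervalIntegral.integral_of_le (zero_le_one (α := ℝ))]
    exact intS n
  have key : ((n:ℝ≥0∞)^3) * volume A ≤ ENNReal.ofReal ((n:ℝ)^2) := by
    have l1 : ((n:ℝ≥0∞)^3) * volume A = ∫⁻ _ in A, ((n:ℝ≥0∞)^3) ∂volume :=
      (setLIntegral_const A _).symm
    have l2 : (∫⁻ _ in A, ((n:ℝ≥0∞)^3) ∂volume) ≤ ∫⁻ x in A, ENNReal.ofReal ((S x)^4) ∂volume := by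
      refine setLIntegral_mono ((hScont.pow 4).measurable.ennreal_ofReal) (fun x hx => ?_)
      have : ((n:ℝ≥0∞)^3) = ENNReal.ofReal ((n:ℝ)^(3:ℕ)) := by
        rw [ENNReal.ofReal_pow (Nat.cast_nonneg n), ENNReal.ofReal_natCast]
      rw [this]
      exact ENNReal.ofReal_le_ofReal (hlb x hx)
    have l3 : (∫⁻ x in A, ENNReal.ofReal ((S x)^4) ∂volume)
        ≤ ∫⁻ x in Set.Icc (0:ℝ) 1, ENNReal.ofReal ((S x)^4) ∂volume :=
      lintegral_mono' (Measure.restrict_mono hsub le_rfl) le_rfl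
    have l4 : (∫⁻ x in Set.Icc (0:ℝ) 1, ENNReal.ofReal ((S x)^4) ∂volume)
        = ENNReal.ofReal (∫ x in Set.Icc (0:ℝ) 1, (S x)^4 ∂volume) :=
      (MeasureTheory.ofReal_integral_eq_lintegral_ofReal hg
        (Filter.Eventually.of_forall (fun x => by positivity))).symm
    calc ((n:ℝ≥0∞)^3) * volume A = ∫⁻ _ in A, ((n:ℝ≥0∞)^3) ∂volume := l1
    _ ≤ ∫⁻ x in A, ENNReal.ofReal ((S x)^4) ∂volume := l2
    _ ≤ ∫⁻ x in Set.Icc (0:ℝ) 1, ENNReal.ofReal ((S x)^4) ∂volume := l3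
    _ = ENNReal.ofReal (∫ x in Set.Icc (0:ℝ) 1, (S x)^4 ∂volume) := l4
    _ ≤ ENNReal.ofReal ((n:ℝ)^2) := ENNReal.ofReal_le_ofReal l5
  have hof : ENNReal.ofReal ((n:ℝ)^2) = (n:ℝ≥0∞)^2 := by
    rw [ENNReal.ofReal_pow (Nat.cast_nonneg n), ENNReal.ofReal_natCast]
  rw [hof] at key
  have hn0 : (n:ℝ≥0∞) ≠ 0 := Nat.cast_ne_zero.mpr (by omega)
  have hnt : (n:ℝ≥0∞) ≠ ⊤ := ENNReal.natCast_ne_top n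
  rw [ENNReal.le_div_iff_mul_le (Or.inl hn0) (Or.inl hnt)]
  have h20 : ((n:ℝ≥0∞)^2) ≠ 0 := pow_ne_zero _ hn0
  have h2t : ((n:ℝ≥0∞)^2) ≠ ⊤ := ENNReal.pow_ne_top hnt
  rw [← ENNReal.mul_le_mul_iff_right h20 h2t]
  calc (n:ℝ≥0∞)^2 * (volume A * (n:ℝ≥0∞)) = (n:ℝ≥0∞)^3 * volume A := by ring
  _ ≤ (n:ℝ≥0∞)^2 := key
  _ = (n:ℝ≥0∞)^2 * 1 := by rw [mul_one]
end

section
/- For every real number x there exists a complex number w with |w| ≤ |x|³ such that e^{ix} = (1 + i·x)·e^{−x²/2 + w}. -/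
open scoped Real

private lemma arctan_le_self {x : ℝ} (hx : 0 ≤ x) : Real.arctan x ≤ x := by
  have mono : Monotone (fun t : ℝ => t - Real.arctan t) := by
    have hd : ∀ t : ℝ, HasDerivAt (fun t : ℝ => t - Real.arctan t) (1 - 1/(1+t^2)) t :=
      fun t => (hasDerivAt_id t).sub (Real.hasDerivAt_arctan t)
    apply monotone_of_deriv_nonneg
    · exact fun t => (hd t).differentiableAt
    · intro t
      rw [(hd t).deriv]
      have h1 : (0:ℝ) < 1 + t^2 := by positivity
      rw [sub_nonneg, div_le_one h1]
      nlinarith [sq_nonneg t]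
  have := mono hx
  simpa [Real.arctan_zero] using this

private lemma self_sub_arctan_le {x : ℝ} (hx : 0 ≤ x) :
    x - Real.arctan x ≤ x^3 / 3 := by
  have mono : Monotone (fun t : ℝ => t^3/3 - t + Real.arctan t) := by
    have hd : ∀ t : ℝ, HasDerivAt (fun t : ℝ => t^3/3 - t + Real.arctan t)
        (t^2 - 1 + 1/(1+t^2)) t := by
      intro t
      have h1 : HasDerivAt (fun t : ℝ => t^3/3) (t^2) t := by
        have := (hasDerivAt_pow 3 t).div_const 3
        simpa using this
      exact (h1.sub (hasDerivAt_id t)).add (Real.hasDerivAt_arctan t)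
    apply monotone_of_deriv_nonneg
    · exact fun t => (hd t).differentiableAt
    · intro t
      rw [(hd t).deriv]
      have h1 : (0:ℝ) < 1 + t^2 := by positivity
      have h2 : t^2 - 1 + 1/(1+t^2) = t^4/(1+t^2) := by field_simp; ring
      rw [h2]
      positivity
  have := mono hx
  simp only [Real.arctan_zero] at this
  have h0 : (0:ℝ)^3/3 - 0 + 0 = 0 := by norm_num
  linarith [this, h0.symm ▸ this]

private lemma abs_self_sub_arctan_le (x : ℝ) :
    |x - Real.arctan x| ≤ |x|^3 / 3 := by
  rcases le_or_gt 0 x with hx | hx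
  · rw [abs_of_nonneg (by linarith [arctan_le_self hx]), abs_of_nonneg hx]
    exact self_sub_arctan_le hx
  · have hx' : (0:ℝ) ≤ -x := by linarith
    have h1 := self_sub_arctan_le hx'
    have h2 := arctan_le_self hx'
    rw [Real.arctan_neg] at h1 h2
    rw [abs_of_nonpos (by linarith), abs_of_neg hx]
    linarith

theorem exp_I_mul_eq (x : ℝ) :
    ∃ w : ℂ, ‖w‖ ≤ |x| ^ 3 ∧
      Complex.exp (Complex.I * x) = (1 + Complex.I * x) * Complex.exp (-(x : ℂ) ^ 2 / 2 + w) := by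
  set a : ℝ := x^2/2 - Real.log (1 + x^2) / 2 with ha
  set b : ℝ := x - Real.arctan x with hb
  refine ⟨(a : ℂ) + (b : ℂ) * Complex.I, ?_, ?_⟩
  · -- bound
    have habs : ‖(a : ℂ) + (b : ℂ) * Complex.I‖ ≤ |a| + |b| := by
      have := Complex.norm_le_abs_re_add_abs_im ((a : ℂ) + (b : ℂ) * Complex.I)
      simpa using this
    have h1 : (0:ℝ) < 1 + x^2 := by positivity
    -- bound on a
    have hlog1 : Real.log (1 + x^2) ≤ x^2 := by
      have := Real.log_le_sub_one_of_pos h1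
      linarith
    have hlog2 : 1 - (1 + x^2)⁻¹ ≤ Real.log (1 + x^2) :=
      Real.one_sub_inv_le_log_of_pos h1
    have ha_nonneg : 0 ≤ a := by rw [ha]; linarith
    have ha_le : a ≤ |x|^3 / 2 := by
      have h2 : x^2 - Real.log (1 + x^2) ≤ x^4 / (1 + x^2) := by
        have h3 : x^2 - (1 - (1 + x^2)⁻¹) = x^4 / (1 + x^2) := by
          field_simp; ring
        linarith [hlog2]
      have h4 : x^4 / (1 + x^2) ≤ |x|^3 := by
        rw [div_le_iff₀ h1]
        have hm : (0:ℝ) ≤ |x| := abs_nonneg x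
        have hx4 : x^4 = |x|^4 := by
          rw [← abs_pow]; rw [abs_of_nonneg (by positivity)]
        have hx2 : x^2 = |x|^2 := (sq_abs x).symm
        rw [hx4, hx2]
        nlinarith [sq_nonneg (|x| - 1), pow_nonneg hm 3]
      rw [ha]
      linarith
    have hb_le : |b| ≤ |x|^3 / 3 := abs_self_sub_arctan_le x
    have habs3 : (0:ℝ) ≤ |x|^3 := by positivity
    calc ‖(a : ℂ) + (b : ℂ) * Complex.I‖ ≤ |a| + |b| := habs
      _ ≤ |x|^3 / 2 + |x|^3 / 3 := by
          rw [abs_of_nonneg ha_nonneg]; linarith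
      _ ≤ |x|^3 := by linarith
  · -- exp identity
    have h1 : (0:ℝ) < 1 + x^2 := by positivity
    have hsq : (0:ℝ) < Real.sqrt (1 + x^2) := Real.sqrt_pos.mpr h1
    have key : (1 : ℂ) + Complex.I * x =
        Complex.exp ((Real.log (1 + x^2) / 2 : ℝ) + (Real.arctan x : ℝ) * Complex.I) := by
      rw [Complex.exp_add, Complex.exp_mul_I, ← Complex.ofReal_exp,
        ← Complex.ofReal_cos, ← Complex.ofReal_sin]
      have e1 : Real.exp (Real.log (1 + x^2) / 2) = Real.sqrt (1 + x^2) := by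
        rw [← Real.log_sqrt h1.le, Real.exp_log hsq]
      rw [e1, Real.cos_arctan, Real.sin_arctan]
      have hs : ((Real.sqrt (1 + x^2) : ℝ) : ℂ) ≠ 0 := by exact_mod_cast hsq.ne'
      push_cast
      field_simp
    rw [key, ← Complex.exp_add]
    congr 1
    rw [ha, hb]
    push_cast
    ring
end
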